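/- For every bivariate copula C, the sequence of dyadic checkerboard approximations (CB_{2^n}(C))_{n∈ℕ} converges weakly conditional to C. Consequently, the class of all checkerboard copulas is dense in the class of all bivariate copulas with respect to weak conditional convergence. -/

import Mathlib

open MeasureTheory Filter Set
open scoped ENNReal

noncomputable section

/-- `C` is a bivariate copula (all conditions imposed on the unit square `[0,1]²`). -/
def IsCopula (C : ℝ → ℝ → ℝ) : Prop :=
  (∀ x ∈ Set.Icc (0:ℝ) 1, C x 0 = 0 ∧ C 0 x = 0 ∧ C x 1 = x ∧ C 1 x = x) ∧
    ∀ x₁ ∈ Set.Icc (0:ℝ) 1, ∀ x₂ ∈ Set.Icc (0:ℝ) 1, ∀ y₁ ∈ Set.Icc (0:ℝ) 1,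
      ∀ y₂ ∈ Set.Icc (0:ℝ) 1, x₁ ≤ x₂ → y₁ ≤ y₂ →
        0 ≤ C x₂ y₂ - C x₂ y₁ - C x₁ y₂ + C x₁ y₁

/-- `K` (as conditional distribution function `(x,y) ↦ K(x,[0,y])`) is a Markov kernel of
the copula `C`, i.e. a regular conditional distribution of the second coordinate given the
first under `μ_C`: for each `x ∈ [0,1]`, `K x` is the distribution function of a
probability measure on `[0,1]`, `x ↦ K x y` is measurable, and the disintegration identity
`∫_{[0,a]} K(t,[0,y]) dλ(t) = μ_C([0,a] × [0,y]) = C(a,y)` holds. -/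
structure IsMarkovKernelOf (C : ℝ → ℝ → ℝ) (K : ℝ → ℝ → ℝ) : Prop where
  meas : ∀ y ∈ Set.Icc (0:ℝ) 1, Measurable fun x => K x y
  mono : ∀ x ∈ Set.Icc (0:ℝ) 1, MonotoneOn (K x) (Set.Icc (0:ℝ) 1)
  nonneg : ∀ x ∈ Set.Icc (0:ℝ) 1, ∀ y ∈ Set.Icc (0:ℝ) 1, 0 ≤ K x y
  apply_one : ∀ x ∈ Set.Icc (0:ℝ) 1, K x 1 = 1
  disint : ∀ a ∈ Set.Icc (0:ℝ) 1, ∀ y ∈ Set.Icc (0:ℝ) 1,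
    ∫ t in Set.Icc (0:ℝ) a, K t y = C a y

/-- Weak conditional convergence of a sequence of copulas, in terms of their conditional
distribution functions: for λ-a.e. `x ∈ [0,1]` the measures `K_{C_n}(x,·)` converge weakly
to `K_C(x,·)`, i.e. the conditional distribution functions converge at every continuity
point of `y ↦ K_C(x,[0,y])` in `[0,1]`. -/
def WeakCondConv (Kseq : ℕ → ℝ → ℝ → ℝ) (K : ℝ → ℝ → ℝ) : Prop :=
  ∀ᵐ x ∂(volume.restrict (Set.Icc (0:ℝ) 1)),
    ∀ y ∈ Set.Icc (0:ℝ) 1, ContinuousWithinAt (fun t => K x t) (Set.Icc 0 1) y →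
      Filter.Tendsto (fun n => Kseq n x y) Filter.atTop (nhds (K x y))

/-- `D` is a checkerboard copula of resolution `N`: its doubly stochastic measure spreads
mass uniformly on each of the `N²` grid squares; equivalently, `D` is a copula which is
bilinear on each grid cell (bilinear interpolation of its values at the grid points). -/
def IsCheckerboard (D : ℝ → ℝ → ℝ) (N : ℕ) : Prop :=
  IsCopula D ∧ 0 < N ∧
    ∀ i < N, ∀ j < N, ∀ x ∈ Set.Icc ((i:ℝ)/N) (((i:ℝ)+1)/N),
      ∀ y ∈ Set.Icc ((j:ℝ)/N) (((j:ℝ)+1)/N),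
        D x y =
          D ((i:ℝ)/N) ((j:ℝ)/N) * (1 - ((N:ℝ)*x - i)) * (1 - ((N:ℝ)*y - j))
          + D (((i:ℝ)+1)/N) ((j:ℝ)/N) * ((N:ℝ)*x - i) * (1 - ((N:ℝ)*y - j))
          + D ((i:ℝ)/N) (((j:ℝ)+1)/N) * (1 - ((N:ℝ)*x - i)) * ((N:ℝ)*y - j)
          + D (((i:ℝ)+1)/N) (((j:ℝ)+1)/N) * ((N:ℝ)*x - i) * ((N:ℝ)*y - j)

/-- `D` is the `N`-checkerboard approximation `CB_N(C)` of the copula `C`: `D` is a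
checkerboard copula of resolution `N` whose doubly stochastic measure assigns to each grid
square the same mass as `μ_C`, i.e. `D` and `C` agree at all grid points. -/
def IsCheckerboardApprox (C D : ℝ → ℝ → ℝ) (N : ℕ) : Prop :=
  IsCheckerboard D N ∧
    ∀ i ≤ N, ∀ j ≤ N, D ((i:ℝ)/N) ((j:ℝ)/N) = C ((i:ℝ)/N) ((j:ℝ)/N)

open scoped Topology

namespace CB

def idx (N : ℕ) (x : ℝ) : ℕ := min (N - 1) ⌊(N : ℝ) * x⌋₊

def interp (N : ℕ) (g : ℕ → ℝ) (y : ℝ) : ℝ :=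
  (1 - ((N:ℝ) * y - idx N y)) * g (idx N y) + ((N:ℝ) * y - idx N y) * g (idx N y + 1)

variable {N : ℕ}

lemma idx_lt (hN : 0 < N) (x : ℝ) : idx N x < N :=
  lt_of_le_of_lt (min_le_left _ _) (Nat.sub_lt hN one_pos)

lemma idx_le_mul {x : ℝ} (hx : 0 ≤ x) : (idx N x : ℝ) ≤ N * x := by
  calc (idx N x : ℝ) ≤ (⌊(N:ℝ) * x⌋₊ : ℝ) := by
        exact_mod_cast min_le_right _ _
    _ ≤ N * x := Nat.floor_le (by positivity)

lemma mul_le_idx_add_one (hN : 0 < N) {x : ℝ} (hx : x ≤ 1) : (N:ℝ) * x ≤ idx N x + 1 := by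
  rcases le_or_gt (⌊(N : ℝ) * x⌋₊) (N - 1) with h | h
  · have : idx N x = ⌊(N : ℝ) * x⌋₊ := min_eq_right h
    rw [this]
    exact (Nat.lt_floor_add_one _).le
  · have : idx N x = N - 1 := min_eq_left h.le
    rw [this]
    have : ((N - 1 : ℕ) : ℝ) + 1 = N := by
      have := Nat.succ_pred_eq_of_pos hN
      exact_mod_cast this
    rw [this]
    have h1 : (1:ℝ) ≤ N := by exact_mod_cast hN
    nlinarith

lemma v_nonneg {y : ℝ} (hy : 0 ≤ y) : 0 ≤ (N:ℝ) * y - idx N y :=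
  sub_nonneg.2 (idx_le_mul hy)

lemma v_le_one (hN : 0 < N) {y : ℝ} (hy : y ≤ 1) : (N:ℝ) * y - idx N y ≤ 1 := by
  have := mul_le_idx_add_one hN hy; linarith

lemma idx_eq (hN : 0 < N) {i : ℕ} {x : ℝ} (hiN : i < N) (h1 : (i:ℝ)/N ≤ x)
    (h2 : x < ((i:ℝ)+1)/N) : idx N x = i := by
  have hN' : (0:ℝ) < N := by exact_mod_cast hN
  have hb1 : (i : ℝ) ≤ N * x := by
    rw [div_le_iff₀ hN'] at h1; linarith [h1]
  have hb2 : (N:ℝ) * x < i + 1 := by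
    rw [lt_div_iff₀ hN'] at h2; linarith [h2]
  have hx0 : (0:ℝ) ≤ N * x := le_trans (by positivity) hb1
  have hfl : ⌊(N:ℝ) * x⌋₊ = i := by
    rw [Nat.floor_eq_iff hx0]
    exact ⟨by exact_mod_cast hb1, by exact_mod_cast hb2⟩
  rw [idx, hfl]
  exact min_eq_right (by omega)

lemma idx_grid (hN : 0 < N) {k : ℕ} (hk : k < N) : idx N ((k:ℝ)/N) = k := by
  have hN' : (0:ℝ) < N := by exact_mod_cast hN
  refine idx_eq hN hk le_rfl ?_
  apply div_lt_div_of_pos_right ?_ hN'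
  · linarith

lemma left_le (hN : 0 < N) {x : ℝ} (hx : 0 ≤ x) : (idx N x : ℝ)/N ≤ x := by
  have hN' : (0:ℝ) < N := by exact_mod_cast hN
  rw [div_le_iff₀ hN']; nlinarith [idx_le_mul (N := N) hx]

lemma le_right (hN : 0 < N) {x : ℝ} (hx : x ≤ 1) : x ≤ ((idx N x : ℝ)+1)/N := by
  have hN' : (0:ℝ) < N := by exact_mod_cast hN
  rw [le_div_iff₀ hN']; nlinarith [mul_le_idx_add_one hN hx]

lemma grid_nonneg (hN : 0 < N) (x : ℝ) : (0:ℝ) ≤ (idx N x : ℝ)/N := by positivity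

lemma grid_le_one (hN : 0 < N) (x : ℝ) : ((idx N x : ℝ)+1)/N ≤ 1 := by
  have hN' : (0:ℝ) < N := by exact_mod_cast hN
  rw [div_le_one hN']
  have := idx_lt hN x
  exact_mod_cast Nat.succ_le_of_lt this

lemma idx_mono : Monotone (idx N) := by
  intro a b hab
  exact min_le_min le_rfl (Nat.floor_le_floor (by nlinarith [Nat.cast_nonneg (α := ℝ) N]))

lemma interp_grid (hN : 0 < N) {k : ℕ} (hk : k ≤ N) (g : ℕ → ℝ) :
    interp N g ((k:ℝ)/N) = g k := by
  have hN' : (0:ℝ) < N := by exact_mod_cast hN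
  rcases lt_or_eq_of_le hk with h | h
  · have hi := idx_grid hN h
    have hv : (N:ℝ) * ((k:ℝ)/N) - (idx N ((k:ℝ)/N) : ℝ) = 0 := by
      rw [hi]; field_simp; ring
    rw [interp, hv, hi]; ring
  · subst h
    have hx : ((k:ℝ)/(k:ℝ)) = 1 := by
      field_simp
    have hi : idx k ((k:ℝ)/k) = k - 1 := by
      rw [hx, idx]
      have : ⌊(k:ℝ) * 1⌋₊ = k := by rw [mul_one]; exact_mod_cast Nat.floor_natCast k
      rw [this]
      exact min_eq_left (by omega)
    have hv : (k:ℝ) * ((k:ℝ)/k) - (idx k ((k:ℝ)/k) : ℝ) = 1 := by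
      rw [hi, hx, mul_one]
      have : ((k - 1 : ℕ) : ℝ) = (k:ℝ) - 1 := by
        have : (1:ℕ) ≤ k := hN
        push_cast [this]; ring
      rw [this]; ring
    rw [interp, hv, hi]
    have : k - 1 + 1 = k := by omega
    rw [this]; ring

lemma interp_cell (hN : 0 < N) {i : ℕ} (hi : i < N) {x : ℝ}
    (hx : x ∈ Icc ((i:ℝ)/N) (((i:ℝ)+1)/N)) (g : ℕ → ℝ) :
    interp N g x = (1 - ((N:ℝ)*x - i)) * g i + ((N:ℝ)*x - i) * g (i+1) := by
  have hN' : (0:ℝ) < N := by exact_mod_cast hN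
  rcases lt_or_eq_of_le hx.2 with h | h
  · rw [interp, idx_eq hN hi hx.1 h]
  · have hx' : x = ((i+1 : ℕ):ℝ)/N := by push_cast; exact h
    rw [hx', interp_grid hN (by omega)]
    have hv : (N:ℝ) * (((i+1:ℕ):ℝ)/N) - (i:ℝ) = 1 := by
      push_cast; field_simp; ring
    rw [hv]; ring

lemma monoN {g : ℕ → ℝ} (hg : ∀ k, k + 1 ≤ N → g k ≤ g (k+1)) :
    ∀ d a, a + d ≤ N → g a ≤ g (a + d) := by
  intro d
  induction d with
  | zero => intro a _; simp
  | succ d ih =>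
    intro a h
    calc g a ≤ g (a + d) := ih a (by omega)
      _ ≤ g (a + d + 1) := hg _ (by omega)
    

lemma interp_mono (hN : 0 < N) {g : ℕ → ℝ} (hg : ∀ k, k + 1 ≤ N → g k ≤ g (k+1)) :
    MonotoneOn (interp N g) (Icc (0:ℝ) 1) := by
  have hmono : ∀ a b, a ≤ b → b ≤ N → g a ≤ g b := by
    intro a b hab hbN
    have := monoN hg (b - a) a (by omega)
    rwa [Nat.add_sub_cancel' hab] at this
  intro y₁ h₁ y₂ h₂ h12
  set j₁ := idx N y₁ with hj₁
  set j₂ := idx N y₂ with hj₂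
  have hj : j₁ ≤ j₂ := idx_mono (by nlinarith [Nat.cast_nonneg (α := ℝ) N] : y₁ ≤ y₂)
  have hv₁0 : 0 ≤ (N:ℝ) * y₁ - j₁ := v_nonneg h₁.1
  have hv₁1 : (N:ℝ) * y₁ - j₁ ≤ 1 := v_le_one hN h₁.2
  have hv₂0 : 0 ≤ (N:ℝ) * y₂ - j₂ := v_nonneg h₂.1
  have hv₂1 : (N:ℝ) * y₂ - j₂ ≤ 1 := v_le_one hN h₂.2
  have hg₁ : g j₁ ≤ g (j₁+1) := hg _ (idx_lt hN y₁)
  have hg₂ : g j₂ ≤ g (j₂+1) := hg _ (idx_lt hN y₂)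
  rcases eq_or_lt_of_le hj with he | hlt
  · rw [interp, interp, ← hj₁, ← hj₂, ← he]
    have : (N:ℝ) * y₁ ≤ (N:ℝ) * y₂ := by nlinarith [Nat.cast_nonneg (α := ℝ) N]
    nlinarith
  · have h1le : interp N g y₁ ≤ g (j₁+1) := by
      rw [interp, ← hj₁]; nlinarith
    have h2ge : g j₂ ≤ interp N g y₂ := by
      rw [interp, ← hj₂]; nlinarith
    have hmid : g (j₁+1) ≤ g j₂ := hmono _ _ hlt (le_of_lt (idx_lt hN y₂))
    linarith

lemma interp_sub (g h : ℕ → ℝ) (y : ℝ) :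
    interp N (fun k => g k - h k) y = interp N g y - interp N h y := by
  simp only [interp]; ring

lemma le_interp (hN : 0 < N) {g : ℕ → ℝ} {y : ℝ} (hy : y ∈ Icc (0:ℝ) 1)
    (hgm : g (idx N y) ≤ g (idx N y + 1)) :
    g (idx N y) ≤ interp N g y ∧ interp N g y ≤ g (idx N y + 1) := by
  have hv0 : 0 ≤ (N:ℝ) * y - idx N y := v_nonneg hy.1
  have hv1 : (N:ℝ) * y - idx N y ≤ 1 := v_le_one hN hy.2
  constructor <;> (rw [interp]; nlinarith)

lemma interp_nonneg (hN : 0 < N) {g : ℕ → ℝ} {y : ℝ} (hy : y ∈ Icc (0:ℝ) 1)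
    (h0 : 0 ≤ g (idx N y)) (h1 : 0 ≤ g (idx N y + 1)) : 0 ≤ interp N g y := by
  have hv0 : 0 ≤ (N:ℝ) * y - idx N y := v_nonneg hy.1
  have hv1 : (N:ℝ) * y - idx N y ≤ 1 := v_le_one hN hy.2
  rw [interp]; nlinarith

lemma idx_zero : idx N 0 = 0 := by simp [idx]
lemma interp_zero (g : ℕ → ℝ) : interp N g 0 = g 0 := by simp [interp, idx_zero]
lemma interp_congr {g h : ℕ → ℝ} (y : ℝ) (e1 : g (idx N y) = h (idx N y))
    (e2 : g (idx N y + 1) = h (idx N y + 1)) : interp N g y = interp N h y := by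
  simp [interp, e1, e2]
lemma interp_const (c y : ℝ) : interp N (fun _ => c) y = c := by simp [interp]; ring
lemma interp_linear (hN : 0 < N) (x : ℝ) : interp N (fun k => (k:ℝ)/N) x = x := by
  have hN' : (0:ℝ) < N := by exact_mod_cast hN
  simp only [interp]
  push_cast
  field_simp
  ring

lemma mem_unit (hN : 0 < N) {k : ℕ} (hk : k ≤ N) : (k:ℝ)/N ∈ Icc (0:ℝ) 1 := by
  have hN' : (0:ℝ) < N := by exact_mod_cast hN
  constructor
  · positivity
  · rw [div_le_one hN']; exact_mod_cast hk

def Efun (C : ℝ → ℝ → ℝ) (N : ℕ) (k : ℕ) (y : ℝ) : ℝ :=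
  interp N (fun l => C ((k:ℝ)/N) ((l:ℝ)/N)) y

def cb (C : ℝ → ℝ → ℝ) (N : ℕ) (x y : ℝ) : ℝ :=
  interp N (fun k => Efun C N k y) x

def ker (C : ℝ → ℝ → ℝ) (N : ℕ) (x y : ℝ) : ℝ :=
  N * (Efun C N (idx N x + 1) y - Efun C N (idx N x) y)

variable {C : ℝ → ℝ → ℝ}

lemma Efun_grid (hN : 0 < N) {k l : ℕ} (hl : l ≤ N) :
    Efun C N k ((l:ℝ)/N) = C ((k:ℝ)/N) ((l:ℝ)/N) :=
  interp_grid hN hl _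

lemma cb_grid (hN : 0 < N) {k l : ℕ} (hk : k ≤ N) (hl : l ≤ N) :
    cb C N ((k:ℝ)/N) ((l:ℝ)/N) = C ((k:ℝ)/N) ((l:ℝ)/N) := by
  rw [cb, interp_grid hN hk, Efun_grid hN hl]

lemma Efun_zero (hC : IsCopula C) (hN : 0 < N) {k : ℕ} (hk : k ≤ N) :
    Efun C N k 0 = 0 := by
  rw [Efun, interp_zero]
  have : ((0:ℕ):ℝ)/N = 0 := by simp
  rw [this]
  exact (hC.1 _ (mem_unit hN hk)).1

lemma Efun_one (hC : IsCopula C) (hN : 0 < N) {k : ℕ} (hk : k ≤ N) :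
    Efun C N k 1 = (k:ℝ)/N := by
  have h1 : (1:ℝ) = ((N:ℕ):ℝ)/N := by
    have hN' : (0:ℝ) < N := by exact_mod_cast hN
    field_simp
  rw [Efun, h1, interp_grid hN le_rfl]
  rw [← h1]
  exact (hC.1 _ (mem_unit hN hk)).2.2.1

lemma cb_two_increasing (hC : IsCopula C) (hN : 0 < N) :
    ∀ x₁ ∈ Set.Icc (0:ℝ) 1, ∀ x₂ ∈ Set.Icc (0:ℝ) 1, ∀ y₁ ∈ Set.Icc (0:ℝ) 1,
      ∀ y₂ ∈ Set.Icc (0:ℝ) 1, x₁ ≤ x₂ → y₁ ≤ y₂ →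
        0 ≤ cb C N x₂ y₂ - cb C N x₂ y₁ - cb C N x₁ y₂ + cb C N x₁ y₁ := by
  intro x₁ hx₁ x₂ hx₂ y₁ hy₁ y₂ hy₂ hx hy
  have key : ∀ x, cb C N x y₂ - cb C N x y₁
      = interp N (fun k => Efun C N k y₂ - Efun C N k y₁) x := by
    intro x; rw [interp_sub]; rfl
  have hmono : MonotoneOn (interp N (fun k => Efun C N k y₂ - Efun C N k y₁)) (Icc (0:ℝ) 1) := by
    apply interp_mono hN
    intro k hk
    have hsub : ∀ y, Efun C N (k+1) y - Efun C N k y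
        = interp N (fun l => C (((k+1:ℕ):ℝ)/N) ((l:ℝ)/N) - C ((k:ℝ)/N) ((l:ℝ)/N)) y := by
      intro y; rw [interp_sub]; rfl
    have hmono2 : MonotoneOn
        (interp N (fun l => C (((k+1:ℕ):ℝ)/N) ((l:ℝ)/N) - C ((k:ℝ)/N) ((l:ℝ)/N)))
        (Icc (0:ℝ) 1) := by
      apply interp_mono hN
      intro l hl
      have h2 := hC.2 ((k:ℝ)/N) (mem_unit hN (by omega)) (((k+1:ℕ):ℝ)/N)
        (mem_unit hN hk) ((l:ℝ)/N) (mem_unit hN (by omega)) (((l+1:ℕ):ℝ)/N)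
        (mem_unit hN hl) ?_ ?_
      · linarith
      · have hN' : (0:ℝ) < N := by exact_mod_cast hN
        apply div_le_div_of_nonneg_right ?_ hN'.le
        push_cast; linarith
      · have hN' : (0:ℝ) < N := by exact_mod_cast hN
        apply div_le_div_of_nonneg_right ?_ hN'.le
        push_cast; linarith
    have := hmono2 hy₁ hy₂ hy
    have e1 := hsub y₁
    have e2 := hsub y₂
    linarith
  have := hmono hx₁ hx₂ hx
  have e1 := key x₁
  have e2 := key x₂
  linarith

lemma cb_copula (hC : IsCopula C) (hN : 0 < N) : IsCopula (cb C N) := by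
  constructor
  · intro x hx
    have hIx : idx N x + 1 ≤ N := idx_lt hN x
    have hIxle : idx N x ≤ N := by omega
    refine ⟨?_, ?_, ?_, ?_⟩
    · rw [cb]
      rw [interp_congr (h := fun _ => (0:ℝ)) x (Efun_zero hC hN hIxle)
        (Efun_zero hC hN hIx), interp_const]
    · have e1 : C (((0:ℕ):ℝ)/N) ((idx N x : ℝ)/N) = 0 := by
        simp only [Nat.cast_zero, zero_div]
        exact (hC.1 _ (mem_unit hN hIxle)).2.1
      have e2 : C (((0:ℕ):ℝ)/N) (((idx N x + 1 : ℕ) : ℝ)/N) = 0 := by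
        simp only [Nat.cast_zero, zero_div]
        exact (hC.1 _ (mem_unit hN hIx)).2.1
      have h0 : (0:ℝ) = ((0:ℕ):ℝ)/N := by simp
      conv_lhs => rw [cb, h0, interp_grid hN (Nat.zero_le N), Efun,
        interp_congr (h := fun _ => (0:ℝ)) x e1 e2, interp_const]
    · rw [cb]
      rw [interp_congr (h := fun k => (k:ℝ)/N) x (Efun_one hC hN hIxle)
        (Efun_one hC hN hIx), interp_linear hN]
    · have hx1 : ((N:ℕ):ℝ)/N = 1 := by
        have hN' : (0:ℝ) < N := by exact_mod_cast hN
        field_simp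
      have e1 : C (((N:ℕ):ℝ)/N) ((idx N x : ℝ)/N) = (idx N x : ℝ)/N := by
        rw [hx1]; exact (hC.1 _ (mem_unit hN hIxle)).2.2.2
      have e2 : C (((N:ℕ):ℝ)/N) (((idx N x + 1 : ℕ):ℝ)/N) = ((idx N x + 1 : ℕ):ℝ)/N := by
        rw [hx1]; exact (hC.1 _ (mem_unit hN hIx)).2.2.2
      conv_lhs => rw [cb, show (1:ℝ) = ((N:ℕ):ℝ)/N from hx1.symm,
        interp_grid hN le_rfl, Efun,
        interp_congr (h := fun l => (l:ℝ)/N) x e1 e2, interp_linear hN]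
  · exact cb_two_increasing hC hN

lemma cb_cell (hC : IsCopula C) (hN : 0 < N) :
    ∀ i < N, ∀ j < N, ∀ x ∈ Set.Icc ((i:ℝ)/N) (((i:ℝ)+1)/N),
      ∀ y ∈ Set.Icc ((j:ℝ)/N) (((j:ℝ)+1)/N),
        cb C N x y =
          cb C N ((i:ℝ)/N) ((j:ℝ)/N) * (1 - ((N:ℝ)*x - i)) * (1 - ((N:ℝ)*y - j))
          + cb C N (((i:ℝ)+1)/N) ((j:ℝ)/N) * ((N:ℝ)*x - i) * (1 - ((N:ℝ)*y - j))
          + cb C N ((i:ℝ)/N) (((j:ℝ)+1)/N) * (1 - ((N:ℝ)*x - i)) * ((N:ℝ)*y - j)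
          + cb C N (((i:ℝ)+1)/N) (((j:ℝ)+1)/N) * ((N:ℝ)*x - i) * ((N:ℝ)*y - j) := by
  intro i hi j hj x hx y hy
  have c1 : ((i:ℝ)+1)/N = ((i+1:ℕ):ℝ)/N := by push_cast; ring
  have c2 : ((j:ℝ)+1)/N = ((j+1:ℕ):ℝ)/N := by push_cast; ring
  have hE : ∀ k : ℕ, Efun C N k y
      = (1 - ((N:ℝ)*y - j)) * C ((k:ℝ)/N) ((j:ℝ)/N) + ((N:ℝ)*y - j) * C ((k:ℝ)/N) (((j+1:ℕ):ℝ)/N) := by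
    intro k
    rw [Efun, interp_cell hN hj (c2 ▸ hy)]
  rw [cb, interp_cell hN hi (c1 ▸ hx), hE, hE]
  rw [c1, c2, cb_grid hN hi.le hj.le, cb_grid hN (by omega : i+1 ≤ N) hj.le,
    cb_grid hN hi.le (by omega : j+1 ≤ N), cb_grid hN (by omega : i+1 ≤ N) (by omega : j+1 ≤ N)]
  push_cast
  ring

lemma cb_approx (hC : IsCopula C) (hN : 0 < N) : IsCheckerboardApprox C (cb C N) N := by
  refine ⟨⟨cb_copula hC hN, hN, cb_cell hC hN⟩, ?_⟩
  intro i hi j hj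
  exact cb_grid hN hi hj

-- first-variable monotonicity of C on grid points
lemma grid_mono1 (hC : IsCopula C) (hN : 0 < N) {k l : ℕ} (hk : k + 1 ≤ N) (hl : l ≤ N) :
    C ((k:ℝ)/N) ((l:ℝ)/N) ≤ C (((k+1:ℕ):ℝ)/N) ((l:ℝ)/N) := by
  have h2 := hC.2 ((k:ℝ)/N) (mem_unit hN (by omega)) (((k+1:ℕ):ℝ)/N) (mem_unit hN hk)
    0 (by simp) ((l:ℝ)/N) (mem_unit hN hl) ?_ (mem_unit hN hl).1
  · have e1 : C ((k:ℝ)/N) 0 = 0 := (hC.1 _ (mem_unit hN (by omega))).1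
    have e2 : C (((k+1:ℕ):ℝ)/N) 0 = 0 := (hC.1 _ (mem_unit hN hk)).1
    linarith
  · have hN' : (0:ℝ) < N := by exact_mod_cast hN
    apply div_le_div_of_nonneg_right ?_ hN'.le
    push_cast; linarith

lemma grid_slope_mono (hC : IsCopula C) (hN : 0 < N) {k : ℕ} (hk : k + 1 ≤ N)
    (l : ℕ) (hl : l + 1 ≤ N) :
    C (((k+1:ℕ):ℝ)/N) ((l:ℝ)/N) - C ((k:ℝ)/N) ((l:ℝ)/N)
      ≤ C (((k+1:ℕ):ℝ)/N) (((l+1:ℕ):ℝ)/N) - C ((k:ℝ)/N) (((l+1:ℕ):ℝ)/N) := by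
  have hN' : (0:ℝ) < N := by exact_mod_cast hN
  have h2 := hC.2 ((k:ℝ)/N) (mem_unit hN (by omega)) (((k+1:ℕ):ℝ)/N) (mem_unit hN hk)
    ((l:ℝ)/N) (mem_unit hN (by omega)) (((l+1:ℕ):ℝ)/N) (mem_unit hN hl) ?_ ?_
  · linarith
  · apply div_le_div_of_nonneg_right ?_ hN'.le; push_cast; linarith
  · apply div_le_div_of_nonneg_right ?_ hN'.le; push_cast; linarith

lemma ker_eq_interp (N : ℕ) (x y : ℝ) :
    ker C N x y = N * interp N
      (fun l => C (((idx N x + 1 : ℕ):ℝ)/N) ((l:ℝ)/N) - C (((idx N x : ℕ):ℝ)/N) ((l:ℝ)/N)) y := by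
  rw [ker, Efun, Efun, ← interp_sub]

lemma ker_meas (N : ℕ) (y : ℝ) : Measurable fun x => ker C N x y := by
  have h1 : Measurable (fun x : ℝ => ⌊(N:ℝ)*x⌋₊) :=
    Nat.measurable_floor.comp (measurable_id.const_mul _)
  have h2 : (fun x => ker C N x y)
      = (fun n : ℕ => (N:ℝ) * (Efun C N (min (N-1) n + 1) y - Efun C N (min (N-1) n) y))
        ∘ (fun x : ℝ => ⌊(N:ℝ)*x⌋₊) := rfl
  rw [h2]
  exact measurable_from_top.comp h1

lemma ker_mono (hC : IsCopula C) (hN : 0 < N) (x : ℝ) :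
    MonotoneOn (ker C N x) (Icc (0:ℝ) 1) := by
  intro y1 h1 y2 h2 h12
  rw [ker_eq_interp, ker_eq_interp]
  have hm := interp_mono hN (g := fun l => C (((idx N x + 1 : ℕ):ℝ)/N) ((l:ℝ)/N)
      - C (((idx N x : ℕ):ℝ)/N) ((l:ℝ)/N)) ?_ h1 h2 h12
  · have hN0 : (0:ℝ) ≤ N := Nat.cast_nonneg N
    exact mul_le_mul_of_nonneg_left hm hN0
  · intro l hl
    have := grid_slope_mono hC hN (k := idx N x) (idx_lt hN x) l hl
    push_cast at this ⊢
    linarith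

lemma ker_nonneg (hC : IsCopula C) (hN : 0 < N) (x : ℝ) {y : ℝ} (hy : y ∈ Icc (0:ℝ) 1) :
    0 ≤ ker C N x y := by
  rw [ker_eq_interp]
  have hN0 : (0:ℝ) ≤ N := Nat.cast_nonneg N
  apply mul_nonneg hN0
  apply interp_nonneg hN hy
  · have := grid_mono1 hC hN (k := idx N x) (l := idx N y) (idx_lt hN x) (idx_lt hN y).le
    push_cast at this ⊢; linarith
  · have := grid_mono1 hC hN (k := idx N x) (l := idx N y + 1) (idx_lt hN x) (idx_lt hN y)
    push_cast at this ⊢; linarith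

lemma ker_one (hC : IsCopula C) (hN : 0 < N) (x : ℝ) : ker C N x 1 = 1 := by
  have hN' : (0:ℝ) < N := by exact_mod_cast hN
  rw [ker, Efun_one hC hN (idx_lt hN x), Efun_one hC hN (idx_lt hN x).le]
  push_cast
  field_simp
  ring

lemma integrableOn_comp_idx (N : ℕ) (F : ℕ → ℝ) {s : Set ℝ} (hs : volume s ≠ ⊤) :
    IntegrableOn (fun t => F (idx N t)) s volume := by
  have h1 : Measurable (fun x : ℝ => ⌊(N:ℝ)*x⌋₊) :=
    Nat.measurable_floor.comp (measurable_id.const_mul _)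
  have hmeas : Measurable (fun t => F (idx N t)) := by
    have h2 : (fun t => F (idx N t)) = (fun n : ℕ => F (min (N-1) n)) ∘ (fun x : ℝ => ⌊(N:ℝ)*x⌋₊) := rfl
    rw [h2]; exact measurable_from_top.comp h1
  apply Measure.integrableOn_of_bounded hs hmeas.aestronglyMeasurable
  · refine ae_of_all _ (fun t => ?_)
    show ‖F (idx N t)‖ ≤ ∑ k ∈ Finset.range (N+1), ‖F k‖
    exact Finset.single_le_sum (f := fun k => ‖F k‖) (fun i _ => norm_nonneg _)
      (Finset.mem_range.2 (by
        have h : idx N t ≤ N - 1 := min_le_left _ _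
        omega))

lemma ker_integrableOn (N : ℕ) (y : ℝ) {s : Set ℝ} (hs : volume s ≠ ⊤) :
    IntegrableOn (fun t => ker C N t y) s volume :=
  integrableOn_comp_idx N (fun k => (N:ℝ) * (Efun C N (k + 1) y - Efun C N k y)) hs

lemma Efun_bot (hC : IsCopula C) (hN : 0 < N) {y : ℝ} : Efun C N 0 y = 0 := by
  have e1 : C (((0:ℕ):ℝ)/N) ((idx N y : ℝ)/N) = 0 := by
    simp only [Nat.cast_zero, zero_div]
    exact (hC.1 _ (mem_unit hN (idx_lt hN y).le)).2.1
  have e2 : C (((0:ℕ):ℝ)/N) (((idx N y + 1 : ℕ):ℝ)/N) = 0 := by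
    simp only [Nat.cast_zero, zero_div]
    exact (hC.1 _ (mem_unit hN (idx_lt hN y))).2.1
  rw [Efun, interp_congr (h := fun _ => (0:ℝ)) y e1 e2, interp_const]

lemma ker_int_grid (hC : IsCopula C) (hN : 0 < N) {y : ℝ} (hy : y ∈ Icc (0:ℝ) 1) :
    ∀ k, k ≤ N → ∫ t in Icc (0:ℝ) ((k:ℝ)/N), ker C N t y = Efun C N k y := by
  have hN' : (0:ℝ) < N := by exact_mod_cast hN
  intro k
  induction k with
  | zero =>
    intro _
    have h0 : ((0:ℕ):ℝ)/N = 0 := by simp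
    rw [h0, Icc_self]
    have hz : volume.restrict ({(0:ℝ)} : Set ℝ) = 0 := by
      rw [Measure.restrict_eq_zero]; simp
    rw [hz, integral_zero_measure, Efun_bot hC hN]
  | succ k ih =>
    intro hk
    have hkN : k < N := hk
    have hle : (k:ℝ)/N ≤ ((k+1:ℕ):ℝ)/N := by
      apply div_le_div_of_nonneg_right ?_ hN'.le; push_cast; linarith
    have hsplit : Icc (0:ℝ) (((k+1:ℕ):ℝ)/N)
        = Icc 0 ((k:ℝ)/N) ∪ Ioc ((k:ℝ)/N) (((k+1:ℕ):ℝ)/N) :=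
      (Icc_union_Ioc_eq_Icc (by positivity) hle).symm
    have hdisj : Disjoint (Icc (0:ℝ) ((k:ℝ)/N)) (Ioc ((k:ℝ)/N) (((k+1:ℕ):ℝ)/N)) :=
      Set.disjoint_left.2 (fun t ht ht' => absurd ht.2 (not_le.2 ht'.1))
    rw [hsplit, setIntegral_union hdisj measurableSet_Ioc
      (ker_integrableOn N y (by rw [Real.volume_Icc]; exact ENNReal.ofReal_ne_top))
      (ker_integrableOn N y (by rw [Real.volume_Ioc]; exact ENNReal.ofReal_ne_top))]
    rw [ih hkN.le]
    have hval : ∫ t in Ioc ((k:ℝ)/N) (((k+1:ℕ):ℝ)/N), ker C N t y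
        = (N:ℝ) * (Efun C N (k+1) y - Efun C N k y) * (1/N) := by
      rw [integral_Ioc_eq_integral_Ioo,
        setIntegral_congr_fun measurableSet_Ioo
          (g := fun _ => (N:ℝ) * (Efun C N (k+1) y - Efun C N k y)) ?_,
        setIntegral_const, measureReal_def, Real.volume_Ioo, smul_eq_mul]
      · rw [ENNReal.toReal_ofReal (by linarith)]
        push_cast
        ring
      · intro t ht
        have hidx : idx N t = k := by
          apply idx_eq hN hkN ht.1.le
          have : (((k:ℕ):ℝ)+1)/N = ((k+1:ℕ):ℝ)/N := by push_cast; ring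
          rw [this]; exact ht.2
        show (N:ℝ) * (Efun C N (idx N t + 1) y - Efun C N (idx N t) y) = _
        rw [hidx]
    rw [hval]
    field_simp
    ring

lemma ker_disint (hC : IsCopula C) (hN : 0 < N) :
    ∀ a ∈ Icc (0:ℝ) 1, ∀ y ∈ Icc (0:ℝ) 1,
      ∫ t in Icc (0:ℝ) a, ker C N t y = cb C N a y := by
  have hN' : (0:ℝ) < N := by exact_mod_cast hN
  intro a ha y hy
  set i := idx N a with hi
  have hia : (i:ℝ)/N ≤ a := left_le hN ha.1
  have hai : a ≤ ((i:ℝ)+1)/N := le_right hN ha.2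
  have hsplit : Icc (0:ℝ) a = Icc 0 ((i:ℝ)/N) ∪ Ioc ((i:ℝ)/N) a :=
    (Icc_union_Ioc_eq_Icc (by positivity) hia).symm
  have hdisj : Disjoint (Icc (0:ℝ) ((i:ℝ)/N)) (Ioc ((i:ℝ)/N) a) :=
    Set.disjoint_left.2 (fun t ht ht' => absurd ht.2 (not_le.2 ht'.1))
  rw [hsplit, setIntegral_union hdisj measurableSet_Ioc
    (ker_integrableOn N y (by rw [Real.volume_Icc]; exact ENNReal.ofReal_ne_top))
    (ker_integrableOn N y (by rw [Real.volume_Ioc]; exact ENNReal.ofReal_ne_top))]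
  rw [ker_int_grid hC hN hy i (idx_lt hN a).le]
  have hval : ∫ t in Ioc ((i:ℝ)/N) a, ker C N t y
      = (a - (i:ℝ)/N) * ((N:ℝ) * (Efun C N (i+1) y - Efun C N i y)) := by
    rw [integral_Ioc_eq_integral_Ioo,
      setIntegral_congr_fun measurableSet_Ioo
        (g := fun _ => (N:ℝ) * (Efun C N (i+1) y - Efun C N i y)) ?_,
      setIntegral_const, measureReal_def, Real.volume_Ioo, smul_eq_mul]
    · rw [ENNReal.toReal_ofReal (by linarith)]
    · intro t ht
      have hidx : idx N t = i := idx_eq hN (idx_lt hN a) ht.1.le (lt_of_lt_of_le ht.2 hai)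
      show (N:ℝ) * (Efun C N (idx N t + 1) y - Efun C N (idx N t) y) = _
      rw [hidx]
  rw [hval, cb, interp, ← hi]
  field_simp
  ring

theorem ker_markov (hC : IsCopula C) (hN : 0 < N) : IsMarkovKernelOf (cb C N) (ker C N) where
  meas := fun y _ => ker_meas N y
  mono := fun x _ => ker_mono hC hN x
  nonneg := fun x _ y hy => ker_nonneg hC hN x hy
  apply_one := fun x _ => ker_one hC hN x
  disint := fun a ha y hy => ker_disint hC hN a ha y hy

def lep (N : ℕ) (x : ℝ) : ℝ := (idx N x : ℝ)/(N:ℝ)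
def rep (N : ℕ) (x : ℝ) : ℝ := ((idx N x : ℝ)+1)/(N:ℝ)

lemma rep_sub_lep (hN : 0 < N) (x : ℝ) : rep N x - lep N x = 1/(N:ℝ) := by
  have hN' : (0:ℝ) < N := by exact_mod_cast hN
  rw [rep, lep]; field_simp; ring

lemma lep_nonneg (hN : 0 < N) (x : ℝ) : 0 ≤ lep N x := by
  have hN' : (0:ℝ) < N := by exact_mod_cast hN
  rw [lep]; positivity

lemma rep_le_one (hN : 0 < N) (x : ℝ) : rep N x ≤ 1 := grid_le_one hN x

lemma lep_le (hN : 0 < N) {x : ℝ} (hx : 0 ≤ x) : lep N x ≤ x := left_le hN hx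

lemma le_rep (hN : 0 < N) {x : ℝ} (hx : x ≤ 1) : x ≤ rep N x := le_right hN hx

lemma lep_le_rep (hN : 0 < N) (x : ℝ) : lep N x ≤ rep N x := by
  have := rep_sub_lep hN x
  have hN' : (0:ℝ) < N := by exact_mod_cast hN
  have : (0:ℝ) < 1/(N:ℝ) := by positivity
  linarith [rep_sub_lep hN x]

lemma two_pow_pos (n : ℕ) : 0 < 2^n := Nat.pow_pos (by norm_num)

lemma two_pow_cast_pos (n : ℕ) : (0:ℝ) < ((2^n : ℕ):ℝ) := by
  exact_mod_cast two_pow_pos n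

/-- Dyadic Lebesgue differentiation via the doubling-measure Vitali family on `ℝ`. -/
lemma ae_dyadic (f : ℝ → ℝ) (hf : Integrable f volume) :
    ∀ᵐ x ∂(volume : Measure ℝ), x ∈ Icc (0:ℝ) 1 →
      Tendsto (fun n : ℕ => ((2^n : ℕ):ℝ) * ∫ t in Icc (lep (2^n) x) (rep (2^n) x), f t)
        atTop (𝓝 (f x)) := by
  set v := IsUnifLocDoublingMeasure.vitaliFamily (volume : Measure ℝ) 1 with hv
  filter_upwards [v.ae_tendsto_average hf.locallyIntegrable] with x hx hmem
  have hcell : Tendsto (fun n : ℕ => Icc (lep (2^n) x) (rep (2^n) x)) atTop (v.filterAt x) := by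
    refine v.tendsto_filterAt_iff.2 ⟨?_, ?_⟩
    · refine Eventually.of_forall (fun n => ?_)
      have hN := two_pow_pos n
      have hIcc : Icc (lep (2^n) x) (rep (2^n) x)
          = Metric.closedBall ((lep (2^n) x + rep (2^n) x)/2) ((rep (2^n) x - lep (2^n) x)/2) := by
        rw [Real.closedBall_eq_Icc]; congr 1 <;> ring
      rw [hIcc, hv]
      apply IsUnifLocDoublingMeasure.closedBall_mem_vitaliFamily_of_dist_le_mul
      · rw [Real.dist_eq, abs_le]
        have h1 := lep_le hN hmem.1
        have h2 := le_rep hN hmem.2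
        constructor <;> [linarith; linarith]
      · rw [rep_sub_lep hN]
        have := two_pow_cast_pos n
        positivity
    · intro ε hε
      have htend : Tendsto (fun n : ℕ => ((2:ℝ)⁻¹)^n) atTop (𝓝 0) :=
        tendsto_pow_atTop_nhds_zero_of_lt_one (by norm_num) (by norm_num)
      have hev : ∀ᶠ n : ℕ in atTop, ((2:ℝ)⁻¹)^n < ε := htend.eventually_lt_const hε
      filter_upwards [hev] with n hn
      have hN := two_pow_pos n
      have hinv : 1/((2^n : ℕ):ℝ) < ε := by
        rw [one_div]
        push_cast
        rw [← inv_pow]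
        exact hn
      rw [Real.closedBall_eq_Icc]
      apply Icc_subset_Icc
      · have h2 := le_rep hN hmem.2
        have h3 := rep_sub_lep hN x
        linarith
      · have h1 := lep_le hN hmem.1
        have h3 := rep_sub_lep hN x
        linarith
  have hcomp := hx.comp hcell
  apply hcomp.congr
  intro n
  have hN := two_pow_pos n
  have hN' := two_pow_cast_pos n
  show ⨍ t in Icc (lep (2^n) x) (rep (2^n) x), f t = _
  rw [setAverage_eq, measureReal_def, Real.volume_Icc, rep_sub_lep hN,
    ENNReal.toReal_ofReal (by positivity), smul_eq_mul]
  rw [one_div, inv_inv]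

variable {C K : ℝ → ℝ → ℝ}

lemma K_le_one (hK : IsMarkovKernelOf C K) {t q : ℝ} (ht : t ∈ Icc (0:ℝ) 1)
    (hq : q ∈ Icc (0:ℝ) 1) : K t q ≤ 1 := by
  have := hK.mono t ht hq (right_mem_Icc.2 zero_le_one) hq.2
  rw [hK.apply_one t ht] at this
  exact this

lemma K_intOn (hK : IsMarkovKernelOf C K) {q : ℝ} (hq : q ∈ Icc (0:ℝ) 1) :
    IntegrableOn (fun t => K t q) (Icc (0:ℝ) 1) volume := by
  apply Measure.integrableOn_of_bounded (M := 1) (isCompact_Icc.measure_lt_top).ne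
    (hK.meas q hq).aestronglyMeasurable
  filter_upwards [ae_restrict_mem measurableSet_Icc] with t ht
  rw [Real.norm_eq_abs, abs_le]
  exact ⟨by linarith [hK.nonneg t ht q hq], K_le_one hK ht hq⟩

lemma kernel_diff (hK : IsMarkovKernelOf C K) {l r q : ℝ} (h0 : 0 ≤ l) (hlr : l ≤ r)
    (h1 : r ≤ 1) (hq : q ∈ Icc (0:ℝ) 1) :
    ∫ t in Icc l r, K t q = C r q - C l q := by
  have hIl : IntegrableOn (fun t => K t q) (Icc 0 l) volume :=
    (K_intOn hK hq).mono_set (Icc_subset_Icc le_rfl (le_trans hlr h1))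
  have hIoc : IntegrableOn (fun t => K t q) (Ioc l r) volume :=
    (K_intOn hK hq).mono_set (fun t ht => ⟨le_trans h0 ht.1.le, le_trans ht.2 h1⟩)
  have hsplit : Icc (0:ℝ) r = Icc 0 l ∪ Ioc l r := (Icc_union_Ioc_eq_Icc h0 hlr).symm
  have hdisj : Disjoint (Icc (0:ℝ) l) (Ioc l r) :=
    Set.disjoint_left.2 (fun t ht ht' => absurd ht.2 (not_le.2 ht'.1))
  have hu : ∫ t in Icc (0:ℝ) r, K t q = (∫ t in Icc (0:ℝ) l, K t q) + ∫ t in Ioc l r, K t q := by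
    rw [hsplit, setIntegral_union hdisj measurableSet_Ioc hIl hIoc]
  rw [hK.disint r ⟨le_trans h0 hlr, h1⟩ q hq, hK.disint l ⟨h0, le_trans hlr h1⟩ q hq] at hu
  rw [integral_Icc_eq_integral_Ioc]
  linarith

lemma indicator_integrable (hK : IsMarkovKernelOf C K) {q : ℝ} (hq : q ∈ Icc (0:ℝ) 1) :
    Integrable ((Icc (0:ℝ) 1).indicator (fun t => K t q)) volume :=
  (integrable_indicator_iff measurableSet_Icc).2 (K_intOn hK hq)

lemma cell_subset (hN : 0 < N) (x : ℝ) : Icc (lep N x) (rep N x) ⊆ Icc (0:ℝ) 1 :=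
  Icc_subset_Icc (lep_nonneg hN x) (rep_le_one hN x)

/-- a.e. convergence of dyadic copula difference quotients to the kernel. -/
lemma tendsto_delta (hK : IsMarkovKernelOf C K) {q : ℝ} (hq : q ∈ Icc (0:ℝ) 1) :
    ∀ᵐ x ∂(volume : Measure ℝ), x ∈ Icc (0:ℝ) 1 →
      Tendsto (fun n : ℕ => ((2^n:ℕ):ℝ) * (C (rep (2^n) x) q - C (lep (2^n) x) q))
        atTop (𝓝 (K x q)) := by
  filter_upwards [ae_dyadic _ (indicator_integrable hK hq)] with x hx hmem
  have h := hx hmem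
  rw [indicator_of_mem hmem] at h
  apply h.congr
  intro n
  have hN := two_pow_pos n
  congr 1
  rw [setIntegral_indicator measurableSet_Icc, inter_eq_left.2 (cell_subset hN x),
    kernel_diff hK (lep_nonneg hN x) (lep_le_rep hN x) (rep_le_one hN x) hq]

lemma idx_nest {n m : ℕ} (hnm : n ≤ m) {x : ℝ} (hx : x ∈ Icc (0:ℝ) 1) :
    2^(m-n) * idx (2^n) x ≤ idx (2^m) x
      ∧ idx (2^m) x + 1 ≤ 2^(m-n) * (idx (2^n) x + 1) := by
  have hN := two_pow_pos n
  have hM := two_pow_pos m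
  have hN' := two_pow_cast_pos n
  have hM' := two_pow_cast_pos m
  have ha1 : 1 ≤ 2^(m-n) := Nat.one_le_two_pow
  have hMN : (2:ℕ)^m = 2^(m-n) * 2^n := by rw [← pow_add]; congr 1; omega
  have hpowR : (2:ℝ)^(m-n) * (2:ℝ)^n = (2:ℝ)^m := by rw [← pow_add]; congr 1; omega
  have hpow0 : (0:ℝ) < (2:ℝ)^(m-n) := by positivity
  set i := idx (2^n) x with hi
  have hiN : i ≤ 2^n - 1 := min_le_left _ _
  have hile : (i:ℝ) ≤ ((2^n:ℕ):ℝ) * x := idx_le_mul hx.1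
  push_cast at hile
  constructor
  · apply le_min
    · have h2 : 2^(m-n) * i ≤ 2^(m-n) * (2^n - 1) := Nat.mul_le_mul_left _ hiN
      have h3 : 2^(m-n) * (2^n - 1) + 2^(m-n) = 2^(m-n) * 2^n := by
        rw [← Nat.mul_succ]; congr 1; omega
      omega
    · rw [Nat.le_floor_iff (mul_nonneg (by positivity) hx.1)]
      push_cast
      have key : (2:ℝ)^(m-n) * ((2:ℝ)^n * x) = (2:ℝ)^m * x := by rw [← hpowR]; ring
      have := mul_le_mul_of_nonneg_left hile hpow0.le
      linarith
  · rcases lt_or_eq_of_le (mul_le_idx_add_one hN hx.2) with h | h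
    · push_cast at h
      have hfl : ⌊((2^m:ℕ):ℝ) * x⌋₊ < 2^(m-n) * (i+1) := by
        rw [Nat.floor_lt (mul_nonneg (by positivity) hx.1)]
        push_cast
        have key : (2:ℝ)^(m-n) * ((2:ℝ)^n * x) = (2:ℝ)^m * x := by rw [← hpowR]; ring
        have := mul_lt_mul_of_pos_left h hpow0
        linarith
      have hle := min_le_right ((2^m) - 1) ⌊((2^m:ℕ):ℝ) * x⌋₊
      have : idx (2^m) x < 2^(m-n) * (i+1) := lt_of_le_of_lt hle hfl
      omega
    · push_cast at h
      have hi1 : i + 1 = 2^n := by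
        by_contra hne
        have hlt : i + 1 < 2^n := by have := idx_lt hN x; omega
        have hN2 : ((2:ℝ)^n) ≠ 0 := by positivity
        have hxeq : x = ((i:ℝ)+1)/((2^n:ℕ):ℝ) := by
          push_cast
          field_simp
          linarith
        have : idx (2^n) x = i + 1 := by
          apply idx_eq hN hlt
          · rw [hxeq]; push_cast; exact le_rfl
          · rw [hxeq]
            apply div_lt_div_of_pos_right ?_ hN'
            push_cast; linarith
        omega
      have hidxM : idx (2^m) x ≤ 2^m - 1 := min_le_left _ _
      have hfin : 2^(m-n) * (i + 1) = 2^m := by rw [hi1, hMN]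
      omega

lemma nest_left {n m : ℕ} (hnm : n ≤ m) {x : ℝ} (hx : x ∈ Icc (0:ℝ) 1) :
    (idx (2^n) x : ℝ)/((2^n:ℕ):ℝ) ≤ lep (2^m) x := by
  have hN' := two_pow_cast_pos n
  have hM' := two_pow_cast_pos m
  obtain ⟨h1, -⟩ := idx_nest hnm hx
  have h1' : ((2^(m-n):ℕ):ℝ) * (idx (2^n) x : ℝ) ≤ (idx (2^m) x : ℝ) := by
    exact_mod_cast h1
  have hMNr : ((2^m:ℕ):ℝ) = ((2^(m-n):ℕ):ℝ) * ((2^n:ℕ):ℝ) := by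
    push_cast [← pow_add]
    congr 1; omega
  rw [lep, div_le_div_iff₀ hN' hM', hMNr]
  nlinarith

lemma nest_right {n m : ℕ} (hnm : n ≤ m) {x : ℝ} (hx : x ∈ Icc (0:ℝ) 1) :
    rep (2^m) x ≤ ((idx (2^n) x : ℝ)+1)/((2^n:ℕ):ℝ) := by
  have hN' := two_pow_cast_pos n
  have hM' := two_pow_cast_pos m
  obtain ⟨-, h2⟩ := idx_nest hnm hx
  have h2' : (idx (2^m) x : ℝ) + 1 ≤ ((2^(m-n):ℕ):ℝ) * ((idx (2^n) x : ℝ) + 1) := by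
    exact_mod_cast h2
  have hMNr : ((2^m:ℕ):ℝ) = ((2^(m-n):ℕ):ℝ) * ((2^n:ℕ):ℝ) := by
    push_cast [← pow_add]
    congr 1; omega
  rw [rep, div_le_div_iff₀ hM' hN', hMNr]
  nlinarith

section slope
variable {D : ℝ → ℝ → ℝ}

lemma cell_slope {i j : ℕ}
    (hform : ∀ x ∈ Set.Icc ((i:ℝ)/N) (((i:ℝ)+1)/N),
      ∀ y ∈ Set.Icc ((j:ℝ)/N) (((j:ℝ)+1)/N),
        D x y =
          D ((i:ℝ)/N) ((j:ℝ)/N) * (1 - ((N:ℝ)*x - i)) * (1 - ((N:ℝ)*y - j))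
          + D (((i:ℝ)+1)/N) ((j:ℝ)/N) * ((N:ℝ)*x - i) * (1 - ((N:ℝ)*y - j))
          + D ((i:ℝ)/N) (((j:ℝ)+1)/N) * (1 - ((N:ℝ)*x - i)) * ((N:ℝ)*y - j)
          + D (((i:ℝ)+1)/N) (((j:ℝ)+1)/N) * ((N:ℝ)*x - i) * ((N:ℝ)*y - j))
    {a b q : ℝ} (ha : a ∈ Set.Icc ((i:ℝ)/N) (((i:ℝ)+1)/N))
    (hb : b ∈ Set.Icc ((i:ℝ)/N) (((i:ℝ)+1)/N))
    (hq : q ∈ Set.Icc ((j:ℝ)/N) (((j:ℝ)+1)/N)) :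
    D b q - D a q = (N:ℝ)*(b-a) *
      ((D (((i:ℝ)+1)/N) ((j:ℝ)/N) - D ((i:ℝ)/N) ((j:ℝ)/N)) * (1 - ((N:ℝ)*q - j))
        + (D (((i:ℝ)+1)/N) (((j:ℝ)+1)/N) - D ((i:ℝ)/N) (((j:ℝ)+1)/N)) * ((N:ℝ)*q - j)) := by
  rw [hform b hb q hq, hform a ha q hq]; ring

lemma mem_cell_lep (hN : 0 < N) (x : ℝ) :
    lep N x ∈ Set.Icc ((idx N x:ℝ)/N) (((idx N x:ℝ)+1)/N) :=
  ⟨le_rfl, by rw [show lep N x = (idx N x:ℝ)/N from rfl] at *; exact (lep_le_rep hN x).trans (le_of_eq rfl)⟩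

lemma mem_cell_rep (hN : 0 < N) (x : ℝ) :
    rep N x ∈ Set.Icc ((idx N x:ℝ)/N) (((idx N x:ℝ)+1)/N) :=
  ⟨lep_le_rep hN x, le_rfl⟩

lemma mem_cell_q (hN : 0 < N) {q : ℝ} (hq : q ∈ Icc (0:ℝ) 1) :
    q ∈ Set.Icc ((idx N q:ℝ)/N) (((idx N q:ℝ)+1)/N) :=
  ⟨left_le hN hq.1, le_right hN hq.2⟩

/-- the difference quotient of a checkerboard copula is the same at all finer dyadic levels -/
lemma gval_const {n : ℕ} (hD : IsCheckerboard D (2^n)) {m : ℕ} (hnm : n ≤ m)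
    {x q : ℝ} (hx : x ∈ Icc (0:ℝ) 1) (hq : q ∈ Icc (0:ℝ) 1) :
    ((2^m:ℕ):ℝ) * (D (rep (2^m) x) q - D (lep (2^m) x) q)
      = ((2^n:ℕ):ℝ) * (D (rep (2^n) x) q - D (lep (2^n) x) q) := by
  have hN := two_pow_pos n
  have hM := two_pow_pos m
  have hN' := two_pow_cast_pos n
  have hM' := two_pow_cast_pos m
  have hform := hD.2.2 (idx (2^n) x) (idx_lt hN x) (idx (2^n) q) (idx_lt hN q)
  have hmlepM : lep (2^m) x ∈ Set.Icc ((idx (2^n) x:ℝ)/(2^n:ℕ)) (((idx (2^n) x:ℝ)+1)/(2^n:ℕ)) :=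
    ⟨nest_left hnm hx, (lep_le_rep hM x).trans (nest_right hnm hx)⟩
  have hmrepM : rep (2^m) x ∈ Set.Icc ((idx (2^n) x:ℝ)/(2^n:ℕ)) (((idx (2^n) x:ℝ)+1)/(2^n:ℕ)) :=
    ⟨(nest_left hnm hx).trans (lep_le_rep hM x), nest_right hnm hx⟩
  have hs1 := cell_slope hform hmlepM hmrepM (mem_cell_q hN hq)
  have hs2 := cell_slope hform (mem_cell_lep hN x) (mem_cell_rep hN x) (mem_cell_q hN hq)
  rw [hs1, hs2, rep_sub_lep hM x, rep_sub_lep hN x]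
  field_simp

lemma gval_bounds (hC : IsCopula C) (hN : 0 < N)
    (hDA : IsCheckerboardApprox C D N) {x q : ℝ} (hx : x ∈ Icc (0:ℝ) 1)
    (hq : q ∈ Icc (0:ℝ) 1) :
    (N:ℝ) * (C (rep N x) ((idx N q : ℝ)/N) - C (lep N x) ((idx N q : ℝ)/N))
      ≤ (N:ℝ) * (D (rep N x) q - D (lep N x) q)
  ∧ (N:ℝ) * (D (rep N x) q - D (lep N x) q)
      ≤ (N:ℝ) * (C (rep N x) (((idx N q : ℝ)+1)/N) - C (lep N x) (((idx N q : ℝ)+1)/N)) := by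
  have hN' : (0:ℝ) < N := by exact_mod_cast hN
  have hN0 : (0:ℝ) ≤ N := hN'.le
  set i := idx N x with hi
  set j := idx N q with hj
  have hform := hDA.1.2.2 i (idx_lt hN x) j (idx_lt hN q)
  have hmemq : q ∈ Set.Icc ((j:ℝ)/N) (((j:ℝ)+1)/N) := mem_cell_q hN hq
  have hlep_eq : lep N x = (i:ℝ)/N := rfl
  have hrep_eq : rep N x = ((i:ℝ)+1)/N := rfl
  have hs := cell_slope hform (mem_cell_lep hN x) (mem_cell_rep hN x) hmemq
  rw [rep_sub_lep hN x] at hs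
  -- identify D grid values with C grid values
  have c1 : ((i:ℝ)+1)/(N:ℝ) = ((i+1:ℕ):ℝ)/N := by push_cast; ring
  have c2 : ((j:ℝ)+1)/(N:ℝ) = ((j+1:ℕ):ℝ)/N := by push_cast; ring
  have g00 : D ((i:ℝ)/N) ((j:ℝ)/N) = C ((i:ℝ)/N) ((j:ℝ)/N) :=
    hDA.2 i (idx_lt hN x).le j (idx_lt hN q).le
  have g10 : D (((i:ℝ)+1)/N) ((j:ℝ)/N) = C (((i:ℝ)+1)/N) ((j:ℝ)/N) := by
    rw [c1]; exact hDA.2 (i+1) (idx_lt hN x) j (idx_lt hN q).le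
  have g01 : D ((i:ℝ)/N) (((j:ℝ)+1)/N) = C ((i:ℝ)/N) (((j:ℝ)+1)/N) := by
    rw [c2]; exact hDA.2 i (idx_lt hN x).le (j+1) (idx_lt hN q)
  have g11 : D (((i:ℝ)+1)/N) (((j:ℝ)+1)/N) = C (((i:ℝ)+1)/N) (((j:ℝ)+1)/N) := by
    rw [c1, c2]; exact hDA.2 (i+1) (idx_lt hN x) (j+1) (idx_lt hN q)
  rw [g00, g10, g01, g11] at hs
  have hv0 : 0 ≤ (N:ℝ) * q - j := v_nonneg hq.1
  have hv1 : (N:ℝ) * q - j ≤ 1 := v_le_one hN hq.2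
  have hsl := grid_slope_mono hC hN (k := i) (idx_lt hN x) j (idx_lt hN q)
  rw [← c1, ← c2] at hsl
  have hNsub : (N:ℝ) * (1/(N:ℝ)) = 1 := by field_simp
  rw [hlep_eq, hrep_eq] at hs ⊢
  rw [hs, hNsub, one_mul]
  constructor
  · nlinarith [mul_nonneg (mul_nonneg hN0 hv0) (sub_nonneg.2 hsl)]
  · nlinarith [mul_nonneg (mul_nonneg hN0 (by linarith : (0:ℝ) ≤ 1 - ((N:ℝ)*q - j)))
      (sub_nonneg.2 hsl)]

lemma delta_mono (hC : IsCopula C) (hN : 0 < N) (x : ℝ) {s t : ℝ}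
    (hs : s ∈ Icc (0:ℝ) 1) (ht : t ∈ Icc (0:ℝ) 1) (hst : s ≤ t) :
    (N:ℝ) * (C (rep N x) s - C (lep N x) s) ≤ (N:ℝ) * (C (rep N x) t - C (lep N x) t) := by
  have hN0 : (0:ℝ) ≤ N := (Nat.cast_nonneg N : (0:ℝ) ≤ N)
  have hmemL : lep N x ∈ Icc (0:ℝ) 1 := ⟨lep_nonneg hN x, (lep_le_rep hN x).trans (rep_le_one hN x)⟩
  have hmemR : rep N x ∈ Icc (0:ℝ) 1 := ⟨(lep_nonneg hN x).trans (lep_le_rep hN x), rep_le_one hN x⟩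
  have h2 := hC.2 (lep N x) hmemL (rep N x) hmemR s hs t ht (lep_le_rep hN x) hst
  nlinarith

/-- a.e. identification of an abstract Markov kernel of a checkerboard copula -/
lemma kd_eq {D KD : ℝ → ℝ → ℝ} {n : ℕ} (hDA : IsCheckerboardApprox C (D) (2^n))
    (hKD : IsMarkovKernelOf D KD) {q : ℝ} (hq : q ∈ Icc (0:ℝ) 1) :
    ∀ᵐ x ∂(volume : Measure ℝ), x ∈ Icc (0:ℝ) 1 →
      KD x q = ((2^n:ℕ):ℝ) * (D (rep (2^n) x) q - D (lep (2^n) x) q) := by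
  filter_upwards [ae_dyadic _ (indicator_integrable hKD hq)] with x hx hmem
  have h := hx hmem
  rw [indicator_of_mem hmem] at h
  have h2 : Tendsto (fun m : ℕ => ((2^m : ℕ):ℝ) *
      ∫ t in Icc (lep (2^m) x) (rep (2^m) x), (Icc (0:ℝ) 1).indicator (fun t => KD t q) t)
      atTop (𝓝 (((2^n:ℕ):ℝ) * (D (rep (2^n) x) q - D (lep (2^n) x) q))) := by
    apply Tendsto.congr' ?_ tendsto_const_nhds
    filter_upwards [eventually_ge_atTop n] with m hm
    have hM := two_pow_pos m
    rw [setIntegral_indicator measurableSet_Icc, inter_eq_left.2 (cell_subset hM x),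
      kernel_diff hKD (lep_nonneg hM x) (lep_le_rep hM x) (rep_le_one hM x) hq,
      gval_const hDA.1 hm hmem hq]
  exact tendsto_nhds_unique h h2

end slope

theorem part1 (hC : IsCopula C) (hK : IsMarkovKernelOf C K)
    (D : ℕ → ℝ → ℝ → ℝ) (KD : ℕ → ℝ → ℝ → ℝ)
    (hD : ∀ n, IsCheckerboardApprox C (D n) (2 ^ n))
    (hKD : ∀ n, IsMarkovKernelOf (D n) (KD n)) :
    WeakCondConv KD K := by
  have hA : ∀ᵐ x ∂(volume : Measure ℝ), ∀ q : ℚ, (q:ℝ) ∈ Icc (0:ℝ) 1 → (x ∈ Icc (0:ℝ) 1 →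
      Tendsto (fun n : ℕ => ((2^n:ℕ):ℝ) * (C (rep (2^n) x) q - C (lep (2^n) x) q))
        atTop (𝓝 (K x q))) := by
    rw [ae_all_iff]
    intro q
    by_cases hq : (q:ℝ) ∈ Icc (0:ℝ) 1
    · filter_upwards [tendsto_delta hK hq] with x hx _ using hx
    · filter_upwards with x hq' using absurd hq' hq
  have hB : ∀ᵐ x ∂(volume : Measure ℝ), ∀ n : ℕ, ∀ q : ℚ, (q:ℝ) ∈ Icc (0:ℝ) 1 →
      (x ∈ Icc (0:ℝ) 1 →
        KD n x q = ((2^n:ℕ):ℝ) * (D n (rep (2^n) x) q - D n (lep (2^n) x) q)) := by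
    rw [ae_all_iff]; intro n; rw [ae_all_iff]; intro q
    by_cases hq : (q:ℝ) ∈ Icc (0:ℝ) 1
    · filter_upwards [kd_eq (hD n) (hKD n) hq] with x hx _ using hx
    · filter_upwards with x hq' using absurd hq' hq
  rw [WeakCondConv]
  filter_upwards [ae_restrict_of_ae hA, ae_restrict_of_ae hB, ae_restrict_mem measurableSet_Icc]
    with x hAx hBx hxmem
  intro y hy hcont
  have hy01 : 0 ≤ y := hy.1
  have hy11 : y ≤ 1 := hy.2
  by_cases hy1 : y = 1
  · subst hy1
    rw [hK.apply_one x hxmem]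
    have he : ∀ n, KD n x 1 = 1 := fun n => (hKD n).apply_one x hxmem
    simp only [he]
    exact tendsto_const_nhds
  have hylt : y < 1 := lt_of_le_of_ne hy.2 hy1
  rw [Metric.continuousWithinAt_iff] at hcont
  have htendinv : Tendsto (fun n : ℕ => ((2:ℝ)⁻¹)^n) atTop (𝓝 0) :=
    tendsto_pow_atTop_nhds_zero_of_lt_one (by norm_num) (by norm_num)
  apply tendsto_order.2
  constructor
  · intro a ha
    by_cases hy0 : y = 0
    · subst hy0
      have h0 := hAx 0 (by norm_num) hxmem
      have hz : ∀ n : ℕ, ((2^n:ℕ):ℝ) * (C (rep (2^n) x) ((0:ℚ):ℝ) - C (lep (2^n) x) ((0:ℚ):ℝ))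
          = 0 := by
        intro n
        have hN := two_pow_pos n
        have hmemL : lep (2^n) x ∈ Icc (0:ℝ) 1 :=
          ⟨lep_nonneg hN x, (lep_le_rep hN x).trans (rep_le_one hN x)⟩
        have hmemR : rep (2^n) x ∈ Icc (0:ℝ) 1 :=
          ⟨(lep_nonneg hN x).trans (lep_le_rep hN x), rep_le_one hN x⟩
        have e1 : C (rep (2^n) x) ((0:ℚ):ℝ) = 0 := by
          rw [Rat.cast_zero]; exact (hC.1 _ hmemR).1
        have e2 : C (lep (2^n) x) ((0:ℚ):ℝ) = 0 := by
          rw [Rat.cast_zero]; exact (hC.1 _ hmemL).1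
        rw [e1, e2]; ring
      have hK0 : K x ((0:ℚ):ℝ) = 0 :=
        tendsto_nhds_unique ((h0.congr hz)) tendsto_const_nhds
      rw [Rat.cast_zero] at hK0
      rw [hK0] at ha
      refine Eventually.of_forall (fun n => lt_of_lt_of_le ha ?_)
      exact (hKD n).nonneg x hxmem 0 ⟨le_rfl, zero_le_one⟩
    · have hy0' : 0 < y := lt_of_le_of_ne hy.1 (Ne.symm hy0)
      obtain ⟨δ, hδ0, hδ⟩ := hcont (K x y - a) (by linarith)
      have hδ'0 : 0 < min δ y := lt_min hδ0 hy0'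
      obtain ⟨q₀, hq₀l, hq₀r⟩ := exists_rat_btwn (show y - min δ y < y by linarith)
      obtain ⟨q₁, hq₁l, hq₁r⟩ := exists_rat_btwn hq₀r
      have hmin1 := min_le_left δ y
      have hmin2 := min_le_right δ y
      have hq₀mem : (q₀:ℝ) ∈ Icc (0:ℝ) 1 := ⟨by linarith, by linarith⟩
      have hq₁mem : (q₁:ℝ) ∈ Icc (0:ℝ) 1 := ⟨by linarith, by linarith⟩
      have hKq₀ : a < K x (q₀:ℝ) := by
        have hd := hδ hq₀mem (by rw [Real.dist_eq, abs_lt]; constructor <;> linarith)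
        rw [Real.dist_eq, abs_lt] at hd
        linarith
      have hev1 := (hAx q₀ hq₀mem hxmem).eventually_const_lt hKq₀
      have hev2 : ∀ᶠ n : ℕ in atTop, ((2:ℝ)⁻¹)^n < (q₁:ℝ) - q₀ :=
        htendinv.eventually_lt_const (by linarith)
      filter_upwards [hev1, hev2] with n h1 h2
      have hN := two_pow_pos n
      have hN' := two_pow_cast_pos n
      have hpow : ((2:ℝ)⁻¹)^n = 1/((2^n:ℕ):ℝ) := by
        push_cast
        rw [inv_pow, one_div]
      set j := idx (2^n) q₁ with hj
      have hq1r : (q₁:ℝ) ≤ ((j:ℝ)+1)/((2^n:ℕ):ℝ) := le_right hN hq₁mem.2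
      have hgap : ((j:ℝ)+1)/((2^n:ℕ):ℝ) - (j:ℝ)/((2^n:ℕ):ℝ) = 1/((2^n:ℕ):ℝ) := by
        field_simp
        ring
      have hstep1 : ((2^n:ℕ):ℝ) * (C (rep (2^n) x) (q₀:ℝ) - C (lep (2^n) x) (q₀:ℝ))
          ≤ ((2^n:ℕ):ℝ) * (C (rep (2^n) x) ((j:ℝ)/((2^n:ℕ):ℝ))
            - C (lep (2^n) x) ((j:ℝ)/((2^n:ℕ):ℝ))) := by
        apply delta_mono hC hN x hq₀mem (mem_unit hN (idx_lt hN q₁).le)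
        rw [hpow] at h2
        linarith
      have hgb := (gval_bounds hC hN (hD n) hxmem hq₁mem).1
      have heq := hBx n q₁ hq₁mem hxmem
      have hmono := (hKD n).mono x hxmem hq₁mem hy (le_of_lt hq₁r)
      rw [heq] at hmono
      linarith
  · intro b hb
    obtain ⟨δ, hδ0, hδ⟩ := hcont (b - K x y) (by linarith)
    have hδ'0 : 0 < min δ (1 - y) := lt_min hδ0 (by linarith)
    obtain ⟨q₂, hq₂l, hq₂r⟩ := exists_rat_btwn (show y < y + min δ (1-y) by linarith)
    obtain ⟨q₃, hq₃l, hq₃r⟩ := exists_rat_btwn hq₂r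
    have hmin1 := min_le_left δ (1-y)
    have hmin2 := min_le_right δ (1-y)
    have hq₂mem : (q₂:ℝ) ∈ Icc (0:ℝ) 1 := ⟨by linarith, by linarith⟩
    have hq₃mem : (q₃:ℝ) ∈ Icc (0:ℝ) 1 := ⟨by linarith, by linarith⟩
    have hKq₃ : K x (q₃:ℝ) < b := by
      have hd := hδ hq₃mem (by rw [Real.dist_eq, abs_lt]; constructor <;> linarith)
      rw [Real.dist_eq, abs_lt] at hd
      linarith
    have hev1 := (hAx q₃ hq₃mem hxmem).eventually_lt_const hKq₃
    have hev2 : ∀ᶠ n : ℕ in atTop, ((2:ℝ)⁻¹)^n < (q₃:ℝ) - q₂ :=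
      htendinv.eventually_lt_const (by linarith)
    filter_upwards [hev1, hev2] with n h1 h2
    have hN := two_pow_pos n
    have hN' := two_pow_cast_pos n
    have hpow : ((2:ℝ)⁻¹)^n = 1/((2^n:ℕ):ℝ) := by
      push_cast
      rw [inv_pow, one_div]
    set j := idx (2^n) q₂ with hj
    have hq2l : (j:ℝ)/((2^n:ℕ):ℝ) ≤ (q₂:ℝ) := left_le hN hq₂mem.1
    have hgap : ((j:ℝ)+1)/((2^n:ℕ):ℝ) - (j:ℝ)/((2^n:ℕ):ℝ) = 1/((2^n:ℕ):ℝ) := by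
      field_simp
      ring
    have hjmem : ((j:ℝ)+1)/((2^n:ℕ):ℝ) ∈ Icc (0:ℝ) 1 := by
      constructor
      · positivity
      · exact grid_le_one hN q₂
    have hstep1 : ((2^n:ℕ):ℝ) * (C (rep (2^n) x) (((j:ℝ)+1)/((2^n:ℕ):ℝ))
          - C (lep (2^n) x) (((j:ℝ)+1)/((2^n:ℕ):ℝ)))
        ≤ ((2^n:ℕ):ℝ) * (C (rep (2^n) x) (q₃:ℝ) - C (lep (2^n) x) (q₃:ℝ)) := by
      apply delta_mono hC hN x hjmem hq₃mem
      rw [hpow] at h2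
      linarith
    have hgb := (gval_bounds hC hN (hD n) hxmem hq₂mem).2
    have heq := hBx n q₂ hq₂mem hxmem
    have hmono := (hKD n).mono x hxmem hy hq₂mem (le_of_lt hq₂l)
    rw [heq] at hmono
    linarith

end CB

/-- For every bivariate copula `C` (with Markov kernel `K`), the sequence
of dyadic checkerboard approximations `CB_{2^n}(C)` (with any choice of Markov kernels)
converges weakly conditional to `C`. Consequently, the class of checkerboard copulas is
dense in the class of bivariate copulas with respect to weak conditional convergence. -/
theorem stmt0 (C K : ℝ → ℝ → ℝ) (hC : IsCopula C) (hK : IsMarkovKernelOf C K) :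
    (∀ (D : ℕ → ℝ → ℝ → ℝ) (KD : ℕ → ℝ → ℝ → ℝ),
      (∀ n, IsCheckerboardApprox C (D n) (2 ^ n)) →
      (∀ n, IsMarkovKernelOf (D n) (KD n)) →
      WeakCondConv KD K) ∧
    ∃ (D : ℕ → ℝ → ℝ → ℝ) (KD : ℕ → ℝ → ℝ → ℝ),
      (∀ n, ∃ N, IsCheckerboard (D n) N) ∧
      (∀ n, IsMarkovKernelOf (D n) (KD n)) ∧
      WeakCondConv KD K := by
  constructor
  · intro D KD hDa hKDa
    exact CB.part1 hC hK D KD hDa hKDa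
  · refine ⟨fun n => CB.cb C (2^n), fun n => CB.ker C (2^n), ?_, ?_, ?_⟩
    · intro n
      exact ⟨2^n, (CB.cb_approx hC (CB.two_pow_pos n)).1⟩
    · intro n
      exact CB.ker_markov hC (CB.two_pow_pos n)
    · exact CB.part1 hC hK _ _ (fun n => CB.cb_approx hC (CB.two_pow_pos n))
        (fun n => CB.ker_markov hC (CB.two_pow_pos n))
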